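/- Let r, s > 0 and let P = f·λ_d be a probability measure on ℝ^d with ∫ |x|^{r+η} dP(x) < ∞ for some η > 0. Let (θ,μ) be a P-admissible couple such that sup{ f(μ+θ(z−μ))/f(z) : z ≠ 0, f(z) > 0 } < ∞. Assume inf{ λ_d(supp P ∩ B(x,ρ))/λ_d(B(x,ρ)) : x ∈ supp P, ρ > 0 } > 0, and that f satisfies a local growth control assumption: there exist ε ≥ 0, η' ∈ (0,1/2), M > 0 and C > 0 such that for all x, y ∈ supp P with |x| ≥ M and |y−x| ≤ 2η'|x| one has f(y) ≥ C f(x)^{1+ε}. If ∫ f(x)^{−s(1+ε)/(d+r)} dP(x) < ∞, then hypothesis (H2) holds, i.e. there exist b ∈ (0,1/2) and M' > 0 such that ∫_{{|x|>M'}} ( sup_{0<t≤2b|x|} λ_d(B(x,t))/P(B(x,t)) )^{s/(d+r)} dP_{θ,μ}(x) < ∞. -/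

import Mathlib

open MeasureTheory ENNReal Filter Set Metric Topology
open scoped Classical

noncomputable section

/-- Distance from a point `x` to a finite codebook `α`. -/
def qdist {d : ℕ} (x : EuclideanSpace ℝ (Fin d)) (α : Finset (EuclideanSpace ℝ (Fin d))) : ℝ :=
  Metric.infDist x (α : Set (EuclideanSpace ℝ (Fin d)))

/-- The `r`-th power `L^r` quantization error `∫ d(x,α)^r dP` of a codebook `α`. -/
def qerr {d : ℕ} (P : Measure (EuclideanSpace ℝ (Fin d))) (r : ℝ)
    (α : Finset (EuclideanSpace ℝ (Fin d))) : ℝ≥0∞ :=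
  ∫⁻ x, ENNReal.ofReal (qdist x α) ^ r ∂P

/-- The optimal `n`-level `L^r` quantization error `e_{n,r}(P)`. -/
def enr {d : ℕ} (P : Measure (EuclideanSpace ℝ (Fin d))) (r : ℝ) (n : ℕ) : ℝ≥0∞ :=
  ⨅ (α : Finset (EuclideanSpace ℝ (Fin d))) (_ : α.Nonempty) (_ : α.card ≤ n),
    qerr P r α ^ (1 / r)

/-- The uniform distribution on the unit cube `[0,1]^d`. -/
def unifCube (d : ℕ) : Measure (EuclideanSpace ℝ (Fin d)) :=
  volume.restrict {x | ∀ i, x i ∈ Icc (0 : ℝ) 1}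

/-- The constant `J_{r,d} = inf_{n ≥ 1} n^{r/d} e_{n,r}(U([0,1]^d))^r`. -/
def Jrd (r : ℝ) (d : ℕ) : ℝ≥0∞ :=
  ⨅ (n : ℕ) (_ : 1 ≤ n), (n : ℝ≥0∞) ^ (r / (d : ℝ)) * enr (unifCube d) r n ^ r

/-- Zador's constant `Q_r(P)` for a measure whose a.c. part has density `f`. -/
def Qr {d : ℕ} (f : EuclideanSpace ℝ (Fin d) → ℝ) (r : ℝ) : ℝ≥0∞ :=
  Jrd r d * (∫⁻ x, ENNReal.ofReal (f x) ^ ((d : ℝ) / ((d : ℝ) + r))) ^ (((d : ℝ) + r) / (d : ℝ))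

/-- The dilated/contracted codebook `α^{θ,μ} = μ + θ(α - μ)`. -/
def dilate {d : ℕ} (α : Finset (EuclideanSpace ℝ (Fin d))) (θ : ℝ)
    (μ : EuclideanSpace ℝ (Fin d)) : Finset (EuclideanSpace ℝ (Fin d)) :=
  α.image fun a => μ + θ • (a - μ)

/-- `f_{θ,μ}(x) = f(μ + θ(x-μ))`. -/
def fdil {d : ℕ} (f : EuclideanSpace ℝ (Fin d) → ℝ) (θ : ℝ)
    (μ x : EuclideanSpace ℝ (Fin d)) : ℝ :=
  f (μ + θ • (x - μ))

/-- The image measure `P_{θ,μ}` of `P` under `x ↦ (x-μ)/θ + μ`. -/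
def Pdil {d : ℕ} (P : Measure (EuclideanSpace ℝ (Fin d))) (θ : ℝ)
    (μ : EuclideanSpace ℝ (Fin d)) : Measure (EuclideanSpace ℝ (Fin d)) :=
  Measure.map (fun x => μ + θ⁻¹ • (x - μ)) P

/-- `(θ,μ)` is `P`-admissible for `P = f·λ_d`:
`{f>0} ⊆ μ(1-θ) + θ{f>0}` up to a `λ_d`-null set.  (Note that
`x ∈ μ(1-θ) + θ{f>0}` iff `f((x-μ)/θ + μ) > 0`.) -/
def Admissible {d : ℕ} (f : EuclideanSpace ℝ (Fin d) → ℝ) (θ : ℝ)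
    (μ : EuclideanSpace ℝ (Fin d)) : Prop :=
  ∀ᵐ x ∂(volume : Measure (EuclideanSpace ℝ (Fin d))),
    0 < f x → 0 < f (μ + θ⁻¹ • (x - μ))

/-- The maximal function `ψ_b` attached to `P` and the sequence of codebooks `α`. -/
def maxFun {d : ℕ} (P : Measure (EuclideanSpace ℝ (Fin d)))
    (α : ℕ → Finset (EuclideanSpace ℝ (Fin d))) (b : ℝ)
    (x : EuclideanSpace ℝ (Fin d)) : ℝ≥0∞ :=
  ⨆ (n : ℕ) (_ : 1 ≤ n),
    volume (Metric.ball x (b * qdist x (α n))) / P (Metric.ball x (b * qdist x (α n)))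

/-- An `L^r(P)`-optimal sequence of `n`-quantizers. -/
def OptimalSeq {d : ℕ} (P : Measure (EuclideanSpace ℝ (Fin d))) (r : ℝ)
    (α : ℕ → Finset (EuclideanSpace ℝ (Fin d))) : Prop :=
  ∀ n, 1 ≤ n → (α n).Nonempty ∧ (α n).card ≤ n ∧ qerr P r (α n) = enr P r n ^ r

/-- An asymptotically `L^r(P)`-optimal sequence of quantizers,
for `P` whose a.c. part has density `f`. -/
def AsympOptimalSeq {d : ℕ} (P : Measure (EuclideanSpace ℝ (Fin d)))
    (f : EuclideanSpace ℝ (Fin d) → ℝ) (r : ℝ)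
    (α : ℕ → Finset (EuclideanSpace ℝ (Fin d))) : Prop :=
  (∀ n, 1 ≤ n → (α n).Nonempty ∧ (α n).card ≤ n) ∧
  Tendsto (fun n : ℕ => (n : ℝ≥0∞) ^ (r / (d : ℝ)) * qerr P r (α n)) atTop (𝓝 (Qr f r))

/-- `L^s(P)`-rate-optimality of a sequence of codebooks. -/
def RateOptimal {d : ℕ} (P : Measure (EuclideanSpace ℝ (Fin d))) (s : ℝ)
    (β : ℕ → Finset (EuclideanSpace ℝ (Fin d))) : Prop :=
  limsup (fun n : ℕ => (n : ℝ≥0∞) ^ (s / (d : ℝ)) * qerr P s (β n)) atTop < ⊤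

/-- The support of a measure. -/
def msupp {d : ℕ} (P : Measure (EuclideanSpace ℝ (Fin d))) : Set (EuclideanSpace ℝ (Fin d)) :=
  {x | ∀ ε > 0, 0 < P (Metric.ball x ε)}

/-- Hypothesis (H1): for every `M > 0`,
`sup { f(μ+θ(z-μ))/f(z) : z ∈ B(0,M), f(z) > 0 } < ∞`. -/
def H1 {d : ℕ} (f : EuclideanSpace ℝ (Fin d) → ℝ) (θ : ℝ)
    (μ : EuclideanSpace ℝ (Fin d)) : Prop :=
  ∀ M > (0 : ℝ), ∃ C : ℝ, ∀ z ∈ Metric.ball (0 : EuclideanSpace ℝ (Fin d)) M,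
    0 < f z → f (μ + θ • (z - μ)) / f z ≤ C

/-- Hypothesis (H2). -/
def H2 {d : ℕ} (P : Measure (EuclideanSpace ℝ (Fin d))) (θ : ℝ)
    (μ : EuclideanSpace ℝ (Fin d)) (s r : ℝ) : Prop :=
  ∃ b ∈ Ioo (0 : ℝ) (1 / 2), ∃ M > (0 : ℝ),
    (∫⁻ x in {x : EuclideanSpace ℝ (Fin d) | M < ‖x‖},
      (⨆ t ∈ Ioc (0 : ℝ) (2 * b * ‖x‖),
        volume (Metric.ball x t) / P (Metric.ball x t)) ^ (s / ((d : ℝ) + r))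
      ∂(Pdil P θ μ)) < ⊤

/-- Hypothesis (H3): `λ_d(· ∩ supp P) ≪ P` and `supp P` is a finite union of
closed convex sets. -/
def H3 {d : ℕ} (P : Measure (EuclideanSpace ℝ (Fin d))) : Prop :=
  volume.restrict (msupp P) ≪ P ∧
  ∃ (k : ℕ) (C : Fin k → Set (EuclideanSpace ℝ (Fin d))),
    (∀ i, IsClosed (C i) ∧ Convex ℝ (C i)) ∧ msupp P = ⋃ i, C i

/-- **Criterion 3.2, local growth control.**
Let `r, s > 0`, `P = f·λ_d` with `∫|x|^{r+η} dP < ∞`.  Let `(θ,μ)` be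
`P`-admissible with `sup { f(μ+θ(z-μ))/f(z) : z ≠ 0, f(z) > 0 } < ∞`.  Assume
`inf { λ_d(supp P ∩ B(x,ρ))/λ_d(B(x,ρ)) : x ∈ supp P, ρ > 0 } > 0` and the local
growth control: there are `ε ≥ 0`, `η' ∈ (0,1/2)`, `M, C > 0` such that for all
`x, y ∈ supp P` with `|x| ≥ M` and `|y-x| ≤ 2η'|x|`, `f(y) ≥ C f(x)^{1+ε}`.
If `∫ f^{-s(1+ε)/(d+r)} dP < ∞`, then (H2) holds. -/
theorem stmt_8 {d : ℕ} (hd : 1 ≤ d) (r s : ℝ) (hr : 0 < r) (hs : 0 < s)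
    (f : EuclideanSpace ℝ (Fin d) → ℝ) (hf0 : ∀ x, 0 ≤ f x) (hfm : Measurable f)
    (P : Measure (EuclideanSpace ℝ (Fin d))) [IsProbabilityMeasure P]
    (hP : P = volume.withDensity fun x => ENNReal.ofReal (f x))
    (η : ℝ) (hη : 0 < η)
    (hmom : (∫⁻ x, ENNReal.ofReal ‖x‖ ^ (r + η) ∂P) ≠ ⊤)
    (θ : ℝ) (hθ : 0 < θ) (μ : EuclideanSpace ℝ (Fin d)) (hadm : Admissible f θ μ)
    (hbd : ∃ C : ℝ, ∀ z : EuclideanSpace ℝ (Fin d), z ≠ 0 → 0 < f z →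
      f (μ + θ • (z - μ)) / f z ≤ C)
    (hinf : ∃ c : ℝ≥0∞, 0 < c ∧ ∀ x ∈ msupp P, ∀ ρ > (0 : ℝ),
      c ≤ volume (msupp P ∩ Metric.ball x ρ) / volume (Metric.ball x ρ))
    (ε : ℝ) (hε : 0 ≤ ε) (η' : ℝ) (hη' : η' ∈ Ioo (0 : ℝ) (1 / 2))
    (M C : ℝ) (hM : 0 < M) (hC : 0 < C)
    (hgrowth : ∀ x ∈ msupp P, ∀ y ∈ msupp P,
      M ≤ ‖x‖ → ‖y - x‖ ≤ 2 * η' * ‖x‖ → C * f x ^ (1 + ε) ≤ f y)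
    (hint : (∫⁻ x, ENNReal.ofReal (f x) ^ (-(s * (1 + ε) / ((d : ℝ) + r))) ∂P) < ⊤) :
    H2 P θ μ s r := by
  classical
  obtain ⟨hη'0, hη'2⟩ := hη'
  obtain ⟨C₀, hC₀⟩ := hbd
  obtain ⟨c, hc0, hcle⟩ := hinf
  set T : EuclideanSpace ℝ (Fin d) → EuclideanSpace ℝ (Fin d) :=
    fun x => μ + θ⁻¹ • (x - μ) with hTdef
  have hTmeas : Measurable T := by fun_prop
  have hPdil : Pdil P θ μ = Measure.map T P := rfl
  have hadm' : ∀ᵐ x ∂(volume : Measure (EuclideanSpace ℝ (Fin d))),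
      0 < f x → 0 < f (T x) := hadm
  -- basic constants
  have hC₁pos : (0 : ℝ) < max C₀ 1 := lt_of_lt_of_le one_pos (le_max_right _ _)
  set C₁ : ℝ := max C₀ 1 with hC₁def
  have hbd' : ∀ z : EuclideanSpace ℝ (Fin d), z ≠ 0 → 0 < f z →
      f (μ + θ • (z - μ)) ≤ C₁ * f z := by
    intro z hz hfz
    have h2 : f (μ + θ • (z - μ)) / f z ≤ C₁ := (hC₀ z hz hfz).trans (le_max_left _ _)
    have := mul_le_mul_of_nonneg_right h2 hfz.le
    rwa [div_mul_cancel₀ _ hfz.ne'] at this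
  set c' : ℝ≥0∞ := min c 1 with hc'def
  have hc'0 : 0 < c' := lt_min hc0 one_pos
  have hc'top : c' ≠ ⊤ := (lt_of_le_of_lt (min_le_right _ _) (by norm_num)).ne
  have hdr : (0 : ℝ) < (d : ℝ) + r := by positivity
  have ha : (0 : ℝ) < s / ((d : ℝ) + r) := div_pos hs hdr
  set D : ℝ := C / C₁ ^ (1 + ε) with hDdef
  have hD : 0 < D := div_pos hC (Real.rpow_pos_of_pos hC₁pos _)
  have hE0 : ENNReal.ofReal D ≠ 0 := (ENNReal.ofReal_pos.2 hD).ne'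
  set K : ℝ≥0∞ := (c'⁻¹) ^ (s / ((d : ℝ) + r)) *
    ((ENNReal.ofReal D)⁻¹) ^ (s / ((d : ℝ) + r)) with hKdef
  have hKtop : K ≠ ⊤ :=
    ENNReal.mul_ne_top
      (ENNReal.rpow_ne_top_of_nonneg ha.le (ENNReal.inv_ne_top.2 hc'0.ne'))
      (ENNReal.rpow_ne_top_of_nonneg ha.le (ENNReal.inv_ne_top.2 hE0))
  -- the support is closed
  have hclosed : IsClosed (msupp P) := by
    rw [← isOpen_compl_iff, Metric.isOpen_iff]
    intro x hx
    simp only [msupp, mem_compl_iff, mem_setOf_eq, not_forall] at hx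
    obtain ⟨ρ, hρ⟩ := hx
    obtain ⟨hρ0, hρP⟩ := by
      push_neg at hρ
      exact hρ
    have hρP0 : P (Metric.ball x ρ) = 0 := by simpa using hρP
    refine ⟨ρ / 2, by positivity, fun y hy => ?_⟩
    simp only [msupp, mem_compl_iff, mem_setOf_eq, not_forall]
    refine ⟨ρ / 2, ?_⟩
    push_neg
    refine ⟨by positivity, ?_⟩
    have hsub : Metric.ball y (ρ / 2) ⊆ Metric.ball x ρ := by
      refine Metric.ball_subset_ball' ?_
      have := mem_ball.1 hy
      linarith
    simp [le_antisymm ((measure_mono hsub).trans hρP0.le) zero_le]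
  have hsupp_meas : MeasurableSet (msupp P) := hclosed.measurableSet
  have hPll : P ≪ (volume : Measure (EuclideanSpace ℝ (Fin d))) :=
    hP ▸ withDensity_absolutelyContinuous _ _
  -- (A) a.e. positivity of f
  have hAe1 : ∀ᵐ x ∂P, 0 < f x := by
    rw [ae_iff]
    have hms : MeasurableSet {x : EuclideanSpace ℝ (Fin d) | ¬ 0 < f x} :=
      (measurableSet_lt measurable_const hfm).compl
    rw [hP, withDensity_apply _ hms]
    refine le_antisymm ?_ zero_le
    calc ∫⁻ x in {x | ¬ 0 < f x}, ENNReal.ofReal (f x) ∂volume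
        ≤ ∫⁻ _ in {x | ¬ 0 < f x}, (0 : ℝ≥0∞) ∂volume :=
          setLIntegral_mono measurable_const
            (fun x hx => by simp [ENNReal.ofReal_eq_zero.2 (not_lt.1 hx)])
      _ = 0 := by simp
  -- (B) a.e. positivity of f ∘ T
  have hAe2 : ∀ᵐ x ∂P, 0 < f x → 0 < f (T x) := hadm'.filter_mono hPll.ae_le
  -- (C) the complement of the support is P-null
  have hPsuppc : P ((msupp P)ᶜ) = 0 := by
    have hx : ∀ x : ↥((msupp P)ᶜ), ∃ ρ > (0 : ℝ), P (Metric.ball (x : EuclideanSpace ℝ (Fin d)) ρ) = 0 := by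
      rintro ⟨x, hx⟩
      simp only [msupp, mem_compl_iff, mem_setOf_eq, not_forall] at hx
      obtain ⟨ρ, hρ⟩ := hx
      push_neg at hρ
      exact ⟨ρ, hρ.1, by simpa using hρ.2⟩
    choose ρ hρ0 hρnull using hx
    obtain ⟨Tc, hTc, hTceq⟩ := TopologicalSpace.isOpen_iUnion_countable
      (fun i : ↥((msupp P)ᶜ) => Metric.ball (i : ↥((msupp P)ᶜ)).val (ρ i))
      (fun i => Metric.isOpen_ball)
    have hcover : (msupp P)ᶜ ⊆ ⋃ i : ↥((msupp P)ᶜ), Metric.ball i.val (ρ i) := by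
      intro x hx
      exact mem_iUnion.2 ⟨⟨x, hx⟩, Metric.mem_ball_self (hρ0 _)⟩
    have : P (⋃ i : ↥((msupp P)ᶜ), Metric.ball i.val (ρ i)) = 0 := by
      rw [← hTceq]
      exact (measure_biUnion_null_iff hTc).2 fun i _ => hρnull i
    exact le_antisymm ((measure_mono hcover).trans this.le) zero_le
  -- a.e. (volume), f > 0 implies membership in the support
  have hAeVol : ∀ᵐ y ∂(volume : Measure (EuclideanSpace ℝ (Fin d))),
      0 < f y → y ∈ msupp P := by
    have h1 : ∫⁻ y in (msupp P)ᶜ, ENNReal.ofReal (f y) ∂volume = 0 := by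
      rw [← withDensity_apply _ hsupp_meas.compl, ← hP]; exact hPsuppc
    have h2 : (fun y => ENNReal.ofReal (f y)) =ᶠ[ae (volume.restrict (msupp P)ᶜ)] 0 :=
      (lintegral_eq_zero_iff hfm.ennreal_ofReal).1 h1
    have h3 : ∀ᵐ y ∂(volume : Measure (EuclideanSpace ℝ (Fin d))),
        y ∈ (msupp P)ᶜ → ENNReal.ofReal (f y) = 0 :=
      (ae_restrict_iff' hsupp_meas.compl).1 h2
    filter_upwards [h3] with y hy hfy
    by_contra hmem
    have := hy hmem
    rw [ENNReal.ofReal_eq_zero] at this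
    exact absurd hfy (not_lt.2 this)
  -- transfer through T
  have hAe3 : ∀ᵐ x ∂P, 0 < f (T x) → T x ∈ msupp P := by
    have hBadMeas : MeasurableSet {y : EuclideanSpace ℝ (Fin d) | 0 < f y ∧ y ∉ msupp P} := by
      exact (measurableSet_lt measurable_const hfm).inter hsupp_meas.compl
    have hBadNull : volume {y : EuclideanSpace ℝ (Fin d) | 0 < f y ∧ y ∉ msupp P} = 0 := by
      rw [ae_iff] at hAeVol
      refine le_antisymm (le_trans (measure_mono ?_) hAeVol.le) zero_le
      intro y hy
      simp only [mem_setOf_eq] at hy ⊢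
      exact fun h => hy.2 (h hy.1)
    have hTnull : volume (T ⁻¹' {y : EuclideanSpace ℝ (Fin d) | 0 < f y ∧ y ∉ msupp P}) = 0 := by
      have hpre : T ⁻¹' {y : EuclideanSpace ℝ (Fin d) | 0 < f y ∧ y ∉ msupp P} =
          (fun x => x + (-μ)) ⁻¹' ((fun x => θ⁻¹ • x) ⁻¹'
            ((fun x => μ + x) ⁻¹' {y : EuclideanSpace ℝ (Fin d) | 0 < f y ∧ y ∉ msupp P})) := rfl
      rw [hpre, measure_preimage_add_right,
        Measure.addHaar_preimage_smul volume (inv_ne_zero hθ.ne'),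
        measure_preimage_add, hBadNull, mul_zero]
    have hvol : ∀ᵐ x ∂(volume : Measure (EuclideanSpace ℝ (Fin d))),
        0 < f (T x) → T x ∈ msupp P := by
      rw [ae_iff]
      refine le_antisymm (le_trans (measure_mono ?_) hTnull.le) zero_le
      intro x hx
      simp only [mem_setOf_eq, Classical.not_imp] at hx
      exact hx
    exact hvol.filter_mono hPll.ae_le
  have hAe : ∀ᵐ x ∂P, 0 < f x ∧ 0 < f (T x) ∧ T x ∈ msupp P := by
    filter_upwards [hAe1, hAe2, hAe3] with x h1 h2 h3
    exact ⟨h1, h2 h1, h3 (h2 h1)⟩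
  -- the maximal-function integrand
  set G : EuclideanSpace ℝ (Fin d) → ℝ≥0∞ := fun y =>
    (⨆ t ∈ Ioc (0 : ℝ) (2 * η' * ‖y‖),
      volume (Metric.ball y t) / P (Metric.ball y t)) ^ (s / ((d : ℝ) + r)) with hGdef
  have hSmeas : MeasurableSet {x : EuclideanSpace ℝ (Fin d) | M < ‖x‖} :=
    measurableSet_lt measurable_const measurable_norm
  -- the key pointwise bound
  have key : ∀ᵐ x ∂P, Set.indicator {y : EuclideanSpace ℝ (Fin d) | M < ‖y‖} G (T x) ≤
      K * ENNReal.ofReal (f x) ^ (-(s * (1 + ε) / ((d : ℝ) + r))) := by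
    filter_upwards [hAe] with x hx
    obtain ⟨hfx, hfTx, hTxsupp⟩ := hx
    by_cases hxM : M < ‖T x‖
    swap
    · have hmem : T x ∉ {y : EuclideanSpace ℝ (Fin d) | M < ‖y‖} := hxM
      rw [Set.indicator_of_notMem hmem]; exact zero_le
    have hmem : T x ∈ {y : EuclideanSpace ℝ (Fin d) | M < ‖y‖} := hxM
    rw [Set.indicator_of_mem hmem]
    have hy0 : T x ≠ 0 := by
      intro h
      rw [h, norm_zero] at hxM
      exact absurd hxM (not_lt.2 hM.le)
    have hfy : f x ≤ C₁ * f (T x) := by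
      have hxy : μ + θ • (T x - μ) = x := by
        show μ + θ • (μ + θ⁻¹ • (x - μ) - μ) = x
        rw [add_sub_cancel_left, smul_smul, mul_inv_cancel₀ hθ.ne', one_smul,
          add_sub_cancel]
      have := hbd' (T x) hy0 hfTx
      rwa [hxy] at this
    set k : ℝ≥0∞ := c' * ENNReal.ofReal (C * f (T x) ^ (1 + ε)) with hkdef
    have hCfy : (0 : ℝ) < C * f (T x) ^ (1 + ε) :=
      mul_pos hC (Real.rpow_pos_of_pos hfTx _)
    have hk0 : k ≠ 0 := by
      simp only [hkdef, ne_eq, mul_eq_zero, not_or]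
      exact ⟨hc'0.ne', (ENNReal.ofReal_pos.2 hCfy).ne'⟩
    have hktop : k ≠ ⊤ := ENNReal.mul_ne_top hc'top ENNReal.ofReal_ne_top
    have hsup : (⨆ t ∈ Ioc (0 : ℝ) (2 * η' * ‖T x‖),
        volume (Metric.ball (T x) t) / P (Metric.ball (T x) t)) ≤ k⁻¹ := by
      refine iSup₂_le fun t ht => ?_
      obtain ⟨ht0, htle⟩ := ht
      have hball0 : volume (Metric.ball (T x) t) ≠ 0 := (measure_ball_pos _ _ ht0).ne'
      have hballtop : volume (Metric.ball (T x) t) ≠ ⊤ := measure_ball_lt_top.ne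
      have hPball : k * volume (Metric.ball (T x) t) ≤ P (Metric.ball (T x) t) := by
        have h1 : P (Metric.ball (T x) t) =
            ∫⁻ z in Metric.ball (T x) t, ENNReal.ofReal (f z) ∂volume := by
          rw [hP, withDensity_apply _ measurableSet_ball]
        have h2 : ∫⁻ z in Metric.ball (T x) t ∩ msupp P, ENNReal.ofReal (f z) ∂volume ≤
            ∫⁻ z in Metric.ball (T x) t, ENNReal.ofReal (f z) ∂volume :=
          lintegral_mono' (Measure.restrict_mono inter_subset_left le_rfl) le_rfl
        have h3 : ENNReal.ofReal (C * f (T x) ^ (1 + ε)) *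
            volume (Metric.ball (T x) t ∩ msupp P) ≤
            ∫⁻ z in Metric.ball (T x) t ∩ msupp P, ENNReal.ofReal (f z) ∂volume := by
          rw [← setLIntegral_const]
          refine setLIntegral_mono hfm.ennreal_ofReal fun z hz => ?_
          refine ENNReal.ofReal_le_ofReal ?_
          refine hgrowth (T x) hTxsupp z hz.2 hxM.le ?_
          have hdz : dist z (T x) < t := mem_ball.1 hz.1
          calc ‖z - T x‖ = dist z (T x) := (dist_eq_norm z (T x)).symm
            _ ≤ 2 * η' * ‖T x‖ := hdz.le.trans htle
        have h4 : c' * volume (Metric.ball (T x) t) ≤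
            volume (Metric.ball (T x) t ∩ msupp P) := by
          have hcle' : c' ≤ volume (msupp P ∩ Metric.ball (T x) t) /
              volume (Metric.ball (T x) t) :=
            le_trans (min_le_left _ _) (hcle (T x) hTxsupp t ht0)
          rw [ENNReal.le_div_iff_mul_le (Or.inl hball0) (Or.inl hballtop)] at hcle'
          rwa [Set.inter_comm] at hcle'
        calc k * volume (Metric.ball (T x) t)
            = ENNReal.ofReal (C * f (T x) ^ (1 + ε)) *
              (c' * volume (Metric.ball (T x) t)) := by rw [hkdef]; ring
          _ ≤ ENNReal.ofReal (C * f (T x) ^ (1 + ε)) *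
              volume (Metric.ball (T x) t ∩ msupp P) := mul_le_mul_right h4 _
          _ ≤ ∫⁻ z in Metric.ball (T x) t ∩ msupp P, ENNReal.ofReal (f z) ∂volume := h3
          _ ≤ ∫⁻ z in Metric.ball (T x) t, ENNReal.ofReal (f z) ∂volume := h2
          _ = P (Metric.ball (T x) t) := h1.symm
      calc volume (Metric.ball (T x) t) / P (Metric.ball (T x) t)
          ≤ volume (Metric.ball (T x) t) / (k * volume (Metric.ball (T x) t)) :=
            ENNReal.div_le_div_left hPball _
        _ ≤ k⁻¹ := by
            rw [ENNReal.div_le_iff (mul_ne_zero hk0 hball0)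
              (ENNReal.mul_ne_top hktop hballtop), ← mul_assoc,
              ENNReal.inv_mul_cancel hk0 hktop, one_mul]
    -- compare k with the x-dependent lower bound
    have hkk0 : c' * ENNReal.ofReal (D * f x ^ (1 + ε)) ≤ k := by
      rw [hkdef]
      refine mul_le_mul_right (ENNReal.ofReal_le_ofReal ?_) _
      have h5 : f x / C₁ ≤ f (T x) := (div_le_iff₀ hC₁pos).2 (by linarith [hfy])
      have h6 : (f x / C₁) ^ (1 + ε) ≤ f (T x) ^ (1 + ε) :=
        Real.rpow_le_rpow (by positivity) h5 (by linarith)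
      have h7 : (f x / C₁) ^ (1 + ε) = f x ^ (1 + ε) / C₁ ^ (1 + ε) :=
        Real.div_rpow hfx.le hC₁pos.le _
      have h8 : D * f x ^ (1 + ε) = C * (f x / C₁) ^ (1 + ε) := by
        rw [h7, hDdef]; ring
      rw [h8]
      exact mul_le_mul_of_nonneg_left h6 hC.le
    have hGb : G (T x) ≤ (k⁻¹) ^ (s / ((d : ℝ) + r)) :=
      ENNReal.rpow_le_rpow hsup ha.le
    have hk0inv : (k⁻¹) ^ (s / ((d : ℝ) + r)) ≤
        ((c' * ENNReal.ofReal (D * f x ^ (1 + ε)))⁻¹) ^ (s / ((d : ℝ) + r)) :=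
      ENNReal.rpow_le_rpow (ENNReal.inv_le_inv' hkk0) ha.le
    refine hGb.trans (hk0inv.trans (le_of_eq ?_))
    -- now split the constant
    have hF0 : ENNReal.ofReal (f x) ^ (1 + ε) ≠ 0 :=
      (ENNReal.rpow_pos (ENNReal.ofReal_pos.2 hfx) ENNReal.ofReal_ne_top).ne'
    have hFtop : ENNReal.ofReal (f x) ^ (1 + ε) ≠ ⊤ :=
      ENNReal.rpow_ne_top_of_nonneg (by linarith) ENNReal.ofReal_ne_top
    have hfx1 : ENNReal.ofReal (D * f x ^ (1 + ε)) =
        ENNReal.ofReal D * ENNReal.ofReal (f x) ^ (1 + ε) := by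
      rw [ENNReal.ofReal_mul hD.le, ENNReal.ofReal_rpow_of_pos hfx]
    rw [hfx1, ← mul_assoc,
      ENNReal.mul_inv (Or.inl (mul_ne_zero hc'0.ne' hE0)) (Or.inr hF0),
      ENNReal.mul_inv (Or.inl hc'0.ne') (Or.inr hE0),
      ENNReal.mul_rpow_of_nonneg _ _ ha.le, ENNReal.mul_rpow_of_nonneg _ _ ha.le,
      ← ENNReal.rpow_neg, ← ENNReal.rpow_mul]
    have hexp : -(1 + ε) * (s / ((d : ℝ) + r)) = -(s * (1 + ε) / ((d : ℝ) + r)) := by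
      ring
    rw [hexp, hKdef]
  -- assemble
  refine ⟨η', ⟨hη'0, hη'2⟩, M, hM, ?_⟩
  rw [hPdil, ← lintegral_indicator hSmeas]
  calc ∫⁻ x, Set.indicator {x : EuclideanSpace ℝ (Fin d) | M < ‖x‖} G x ∂(Measure.map T P)
      ≤ ∫⁻ x, Set.indicator {y : EuclideanSpace ℝ (Fin d) | M < ‖y‖} G (T x) ∂P :=
        lintegral_map_le _ T
    _ ≤ ∫⁻ x, K * ENNReal.ofReal (f x) ^ (-(s * (1 + ε) / ((d : ℝ) + r))) ∂P :=
        lintegral_mono_ae key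
    _ = K * ∫⁻ x, ENNReal.ofReal (f x) ^ (-(s * (1 + ε) / ((d : ℝ) + r))) ∂P :=
        lintegral_const_mul K (by fun_prop)
    _ < ⊤ := ENNReal.mul_lt_top hKtop.lt_top hint
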